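/- Every badly approximable interval exchange transformation with irreducible permutation is linearly recurrent: if c = min over discontinuities p,q of T of inf{ n·|q - T^n(p)| : n ∈ ℕ } is positive, then inf{ n·ε_n : n ∈ ℕ } > 0. -/
import Mathlib

open MeasureTheory Finset

set_option maxHeartbeats 4000000 in
/-- Every badly approximable interval exchange transformation with irreducible
permutation is linearly recurrent: if `inf { n |q - Tⁿ p| } ≥ c > 0` over all
discontinuities `p, q` of `T`, then `inf { n ε_n } > 0`. -/
theorem badly_approximable_implies_linearly_recurrent
    (d : ℕ) (hd : 1 ≤ d) (π : Equiv.Perm (Fin d))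
    -- irreducibility: no proper initial segment `{0, …, k-1}` is invariant under `π`
    (hirr : ∀ k : ℕ, 0 < k → k < d → ∃ i : Fin d, (i : ℕ) < k ∧ k ≤ (π i : ℕ))
    (lam : Fin d → ℝ) (hpos : ∀ i, 0 < lam i) (hsum : ∑ i, lam i = 1)
    (T : ℝ → ℝ)
    (hT : ∀ i : Fin d, ∀ x ∈ Set.Ico (∑ j ∈ univ.filter (fun j => j < i), lam j)
        ((∑ j ∈ univ.filter (fun j => j < i), lam j) + lam i),
      T x = x - (∑ j ∈ univ.filter (fun j => j < i), lam j)
        + ∑ j ∈ univ.filter (fun j => π j < π i), lam j)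
    -- the set of discontinuities `D = {β₁, …, β_{d-1}}`
    (D : Set ℝ)
    (hD : D = {x | ∃ i : Fin d, 1 ≤ (i : ℕ) ∧ x = ∑ j ∈ univ.filter (fun j => j < i), lam j})
    -- `S` is the inverse of `T` on `[0,1)`, used to form the preimages `T^{-i} D`
    (S : ℝ → ℝ) (hS : ∀ x ∈ Set.Ico (0:ℝ) 1, S (T x) = x ∧ T (S x) = x)
    -- the partition points determined by `D, T^{-1}D, …, T^{-n}D` together with `0` and `1`
    (P : ℕ → Set ℝ)
    (hP : ∀ n, P n = {0, 1} ∪ ⋃ i ∈ Finset.range (n + 1), S^[i] '' D)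
    -- `ε n` is the length of the shortest interval of the partition
    (ε : ℕ → ℝ)
    (hε : ∀ n, ε n = sInf {t | ∃ x ∈ P n, ∃ y ∈ P n, x < y ∧ t = y - x})
    -- badly approximable, with constant `c > 0`
    (c : ℝ) (hc : 0 < c)
    (hba : ∀ p ∈ D, ∀ q ∈ D, ∀ n : ℕ, 1 ≤ n → c ≤ (n : ℝ) * |q - T^[n] p|) :
    -- linear recurrence
    ∃ c' : ℝ, 0 < c' ∧ ∀ n : ℕ, 1 ≤ n → c' ≤ (n : ℝ) * ε n := by
  classical
  -- partial sum functions
  set A : ℕ → ℝ := fun k => ∑ j ∈ univ.filter (fun j : Fin d => (j : ℕ) < k), lam j with hAdef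
  set B : ℕ → ℝ := fun k => ∑ j ∈ univ.filter (fun j : Fin d => ((π j : Fin d) : ℕ) < k), lam j
    with hBdef
  have hA0 : A 0 = 0 := by simp [hAdef]
  have hB0 : B 0 = 0 := by simp [hBdef]
  have hAone : ∀ k, d ≤ k → A k = 1 := by
    intro k hk
    simp only [hAdef]
    rw [Finset.filter_true_of_mem (fun j _ => lt_of_lt_of_le j.isLt hk)]
    exact hsum
  have hBone : ∀ k, d ≤ k → B k = 1 := by
    intro k hk
    simp only [hBdef]
    rw [Finset.filter_true_of_mem (fun j _ => lt_of_lt_of_le (π j).isLt hk)]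
    exact hsum
  have hAstep : ∀ k, (hk : k < d) → A (k + 1) = A k + lam ⟨k, hk⟩ := by
    intro k hk
    simp only [hAdef]
    have h : univ.filter (fun j : Fin d => (j : ℕ) < k + 1)
        = insert ⟨k, hk⟩ (univ.filter (fun j : Fin d => (j : ℕ) < k)) := by
      ext j; simp [Fin.ext_iff]; omega
    rw [h, Finset.sum_insert (by simp)]
    ring
  have hBstep : ∀ k, (hk : k < d) → B (k + 1) = B k + lam (π.symm ⟨k, hk⟩) := by
    intro k hk
    simp only [hBdef]
    have h : univ.filter (fun j : Fin d => ((π j : Fin d) : ℕ) < k + 1)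
        = insert (π.symm ⟨k, hk⟩) (univ.filter (fun j : Fin d => ((π j : Fin d) : ℕ) < k)) := by
      ext j
      simp only [Finset.mem_insert, Finset.mem_filter, Finset.mem_univ, true_and]
      constructor
      · intro hj
        rcases Nat.lt_succ_iff_lt_or_eq.1 hj with h1 | h1
        · exact Or.inr h1
        · left
          have : π j = ⟨k, hk⟩ := Fin.ext h1
          rw [← this, Equiv.symm_apply_apply]
      · rintro (rfl | hj)
        · simp [Equiv.apply_symm_apply]
        · omega
    rw [h, Finset.sum_insert (by simp [Equiv.apply_symm_apply])]
    ring
  have hAmono : ∀ j k, j ≤ k → A j ≤ A k := by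
    intro j k hjk
    simp only [hAdef]
    apply Finset.sum_le_sum_of_subset_of_nonneg
    · intro x hx
      simp only [Finset.mem_filter, Finset.mem_univ, true_and] at *
      omega
    · intro i _ _; exact (hpos i).le
  have hBmono : ∀ j k, j ≤ k → B j ≤ B k := by
    intro j k hjk
    simp only [hBdef]
    apply Finset.sum_le_sum_of_subset_of_nonneg
    · intro x hx
      simp only [Finset.mem_filter, Finset.mem_univ, true_and] at *
      omega
    · intro i _ _; exact (hpos i).le
  have hAnn : ∀ k, 0 ≤ A k := fun k => hA0 ▸ hAmono 0 k (Nat.zero_le k)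
  have hBnn : ∀ k, 0 ≤ B k := fun k => hB0 ▸ hBmono 0 k (Nat.zero_le k)
  -- conversion of the sums in hT/hD
  have hsum1 : ∀ i : Fin d, (∑ j ∈ univ.filter (fun j => j < i), lam j) = A (i : ℕ) := by
    intro i
    simp only [hAdef]
    apply Finset.sum_congr _ (fun _ _ => rfl)
    ext j
    simp only [Finset.mem_filter, Finset.mem_univ, true_and, Fin.lt_def]
  have hsum2 : ∀ i : Fin d,
      (∑ j ∈ univ.filter (fun j => π j < π i), lam j) = B ((π i : Fin d) : ℕ) := by
    intro i
    simp only [hBdef]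
    apply Finset.sum_congr _ (fun _ _ => rfl)
    ext j
    simp only [Finset.mem_filter, Finset.mem_univ, true_and, Fin.lt_def]
  have hAi1 : ∀ i : Fin d, A ((i : ℕ) + 1) = A (i : ℕ) + lam i := by
    intro i
    have := hAstep (i : ℕ) i.isLt
    simpa using this
  have hBi1 : ∀ i : Fin d, B (((π i : Fin d) : ℕ) + 1) = B ((π i : Fin d) : ℕ) + lam i := by
    intro i
    have := hBstep ((π i : Fin d) : ℕ) (π i).isLt
    simpa using this
  have hT' : ∀ i : Fin d, ∀ x : ℝ, A (i : ℕ) ≤ x → x < A ((i : ℕ) + 1) →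
      T x = x - A (i : ℕ) + B ((π i : Fin d) : ℕ) := by
    intro i x h1 h2
    have hmem : x ∈ Set.Ico (∑ j ∈ univ.filter (fun j => j < i), lam j)
        ((∑ j ∈ univ.filter (fun j => j < i), lam j) + lam i) := by
      rw [hsum1 i]
      exact ⟨h1, by rw [← hAi1 i]; exact h2⟩
    rw [hT i x hmem, hsum1 i, hsum2 i]
  -- piece finding
  have hpiece : ∀ x : ℝ, 0 ≤ x → x < 1 → ∃ i : Fin d, A (i : ℕ) ≤ x ∧ x < A ((i : ℕ) + 1) := by
    intro x hx0 hx1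
    have hex : ∃ k, x < A k := ⟨d, by rw [hAone d le_rfl]; exact hx1⟩
    have hk : x < A (Nat.find hex) := Nat.find_spec hex
    have hk0 : Nat.find hex ≠ 0 := by
      intro h
      rw [h, hA0] at hk; linarith
    have hkd : Nat.find hex ≤ d := Nat.find_min' hex (by rw [hAone d le_rfl]; exact hx1)
    have hprev : ¬ x < A (Nat.find hex - 1) := Nat.find_min hex (by omega)
    refine ⟨⟨Nat.find hex - 1, by omega⟩, not_lt.1 hprev, ?_⟩
    simpa [Nat.sub_add_cancel (Nat.one_le_iff_ne_zero.2 hk0)] using hk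
  have hpieceB : ∀ y : ℝ, 0 ≤ y → y < 1 → ∃ k, ∃ hk : k < d, B k ≤ y ∧ y < B (k + 1) := by
    intro y hy0 hy1
    have hex : ∃ k, y < B k := ⟨d, by rw [hBone d le_rfl]; exact hy1⟩
    have hk : y < B (Nat.find hex) := Nat.find_spec hex
    have hk0 : Nat.find hex ≠ 0 := by
      intro h
      rw [h, hB0] at hk; linarith
    have hkd : Nat.find hex ≤ d := Nat.find_min' hex (by rw [hBone d le_rfl]; exact hy1)
    have hprev : ¬ y < B (Nat.find hex - 1) := Nat.find_min hex (by omega)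
    refine ⟨Nat.find hex - 1, by omega, not_lt.1 hprev, ?_⟩
    rw [Nat.sub_add_cancel (Nat.one_le_iff_ne_zero.2 hk0)]
    exact hk
  -- T maps [0,1) to [0,1)
  have hmapsto : ∀ x : ℝ, 0 ≤ x → x < 1 → 0 ≤ T x ∧ T x < 1 := by
    intro x hx0 hx1
    obtain ⟨i, hi1, hi2⟩ := hpiece x hx0 hx1
    rw [hT' i x hi1 hi2]
    constructor
    · have := hBnn ((π i : Fin d) : ℕ); linarith
    · have h1 : x - A (i : ℕ) + B ((π i : Fin d) : ℕ) < B (((π i : Fin d) : ℕ) + 1) := by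
        rw [hBi1 i]
        have := hAi1 i
        linarith
      have h2 : B (((π i : Fin d) : ℕ) + 1) ≤ 1 := by
        rw [← hBone d le_rfl]
        exact hBmono _ d (π i).isLt
      linarith
  have hTiter : ∀ k : ℕ, ∀ x : ℝ, 0 ≤ x → x < 1 → 0 ≤ T^[k] x ∧ T^[k] x < 1 := by
    intro k
    induction k with
    | zero => intro x hx0 hx1; simpa using ⟨hx0, hx1⟩
    | succ k ih =>
      intro x hx0 hx1
      rw [Function.iterate_succ_apply']
      obtain ⟨h1, h2⟩ := ih x hx0 hx1
      exact hmapsto _ h1 h2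
  -- surjectivity on [0,1) and properties of S
  have hsurj : ∀ y : ℝ, 0 ≤ y → y < 1 → ∃ x : ℝ, (0 ≤ x ∧ x < 1) ∧ T x = y := by
    intro y hy0 hy1
    obtain ⟨k, hk, h1, h2⟩ := hpieceB y hy0 hy1
    set i : Fin d := π.symm ⟨k, hk⟩ with hidef
    have hπi : π i = ⟨k, hk⟩ := Equiv.apply_symm_apply π _
    have hlam : lam i = lam (π.symm ⟨k, hk⟩) := rfl
    have hBk : B (k + 1) = B k + lam i := by rw [hBstep k hk, hlam]
    refine ⟨y - B k + A (i : ℕ), ⟨?_, ?_⟩, ?_⟩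
    · have := hAnn (i : ℕ); linarith
    · have h3 : y - B k + A (i : ℕ) < A ((i : ℕ) + 1) := by
        rw [hAi1 i]; rw [hBk] at h2; linarith
      have h4 : A ((i : ℕ) + 1) ≤ 1 := by
        rw [← hAone d le_rfl]
        exact hAmono _ d i.isLt
      linarith
    · rw [hT' i _ (by linarith) (by rw [hAi1 i]; rw [hBk] at h2; linarith)]
      rw [hπi]
      ring
  have hSmem : ∀ y : ℝ, 0 ≤ y → y < 1 → (0 ≤ S y ∧ S y < 1) ∧ T (S y) = y := by
    intro y hy0 hy1
    obtain ⟨x, ⟨hx0, hx1⟩, hxy⟩ := hsurj y hy0 hy1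
    have := (hS _ ⟨hx0, hx1⟩).1
    rw [hxy] at this
    rw [this, hxy]
    exact ⟨⟨hx0, hx1⟩, rfl⟩
  have hSiter : ∀ k : ℕ, ∀ y : ℝ, 0 ≤ y → y < 1 → 0 ≤ S^[k] y ∧ S^[k] y < 1 := by
    intro k
    induction k with
    | zero => intro y hy0 hy1; simpa using ⟨hy0, hy1⟩
    | succ k ih =>
      intro y hy0 hy1
      rw [Function.iterate_succ_apply']
      obtain ⟨h1, h2⟩ := ih y hy0 hy1
      exact (hSmem _ h1 h2).1
  have hTS : ∀ k : ℕ, ∀ y : ℝ, 0 ≤ y → y < 1 → T^[k] (S^[k] y) = y := by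
    intro k
    induction k with
    | zero => intro y _ _; simp
    | succ k ih =>
      intro y hy0 hy1
      rw [Function.iterate_succ_apply' (f := S), Function.iterate_succ_apply (f := T)]
      obtain ⟨h1, h2⟩ := hSiter k y hy0 hy1
      rw [(hSmem _ h1 h2).2]
      exact ih y hy0 hy1
  have hST : ∀ k : ℕ, ∀ x : ℝ, 0 ≤ x → x < 1 → S^[k] (T^[k] x) = x := by
    intro k
    induction k with
    | zero => intro x _ _; simp
    | succ k ih =>
      intro x hx0 hx1
      rw [Function.iterate_succ_apply (f := T), Function.iterate_succ_apply' (f := S)]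
      obtain ⟨h1, h2⟩ := hmapsto x hx0 hx1
      rw [ih _ h1 h2]
      exact (hS x ⟨hx0, hx1⟩).1
  -- description of D
  have hDco : ∀ p ∈ D, ∃ j : ℕ, 1 ≤ j ∧ j < d ∧ p = A j := by
    intro p hp
    rw [hD] at hp
    obtain ⟨i, hi1, hi2⟩ := hp
    exact ⟨(i : ℕ), hi1, i.isLt, by rw [hi2, hsum1 i]⟩
  have hDco' : ∀ j : ℕ, 1 ≤ j → j < d → A j ∈ D := by
    intro j h1 h2
    rw [hD]
    exact ⟨⟨j, h2⟩, by simpa, (hsum1 ⟨j, h2⟩).symm⟩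
  -- minimal length
  have hdne : (univ : Finset (Fin d)).Nonempty := ⟨⟨0, by omega⟩, Finset.mem_univ _⟩
  set lmin : ℝ := univ.inf' hdne lam with hlmdef
  have hlmle : ∀ i, lmin ≤ lam i := fun i => Finset.inf'_le lam (Finset.mem_univ i)
  have hlm0 : 0 < lmin := by
    rw [hlmdef, Finset.lt_inf'_iff]
    exact fun i _ => hpos i
  have hlm1 : lmin ≤ 1 := by
    refine le_trans (hlmle ⟨0, by omega⟩) ?_
    rw [← hsum]
    exact Finset.single_le_sum (fun i _ => (hpos i).le) (Finset.mem_univ _)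
  have hDtop : ∀ p ∈ D, lmin ≤ 1 - p := by
    intro p hp
    obtain ⟨j, hj1, hj2, rfl⟩ := hDco p hp
    have h1 : A j ≤ A (d - 1) := hAmono j (d - 1) (by omega)
    have h2 : A (d - 1 + 1) = A (d - 1) + lam ⟨d - 1, by omega⟩ := hAstep (d - 1) (by omega)
    have h3 : d - 1 + 1 = d := by omega
    rw [h3, hAone d le_rfl] at h2
    have := hlmle ⟨d - 1, by omega⟩
    linarith
  have hDsub : ∀ p ∈ D, 0 ≤ p ∧ p < 1 := by
    intro p hp
    obtain ⟨j, hj1, hj2, rfl⟩ := hDco p hp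
    have := hDtop _ hp
    exact ⟨hAnn j, by linarith⟩
  have hDgap : ∀ p ∈ D, ∀ q ∈ D, p < q → lmin ≤ q - p := by
    intro p hp q hq hpq
    obtain ⟨j, hj1, hj2, rfl⟩ := hDco p hp
    obtain ⟨j', hj1', hj2', rfl⟩ := hDco q hq
    have hjj : j < j' := by
      by_contra hcon
      exact absurd (hAmono j' j (by omega)) (not_le.2 hpq)
    have h1 : A (j + 1) ≤ A j' := hAmono _ _ (by omega)
    have h2 : A (j + 1) = A j + lam ⟨j, by omega⟩ := hAstep j (by omega)
    have := hlmle ⟨j, by omega⟩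
    linarith
  -- step lemmas
  have stepA : ∀ x w : ℝ, 0 ≤ x → x < 1 → x < w → w ≤ 1 →
      (∀ r ∈ D, ¬(x < r ∧ r < w)) → ∀ y, x ≤ y → y < w → T y = T x + (y - x) := by
    intro x w hx0 hx1 hxw hw1 hfree y hy1 hy2
    obtain ⟨i, hi1, hi2⟩ := hpiece x hx0 hx1
    have hwA : w ≤ A ((i : ℕ) + 1) := by
      by_contra hcon
      push_neg at hcon
      rcases Nat.lt_or_ge ((i : ℕ) + 1) d with hlt | hge
      · exact hfree (A ((i : ℕ) + 1)) (hDco' _ (by omega) hlt) ⟨hi2, hcon⟩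
      · rw [hAone _ hge] at hcon; linarith
    rw [hT' i y (le_trans hi1 hy1) (lt_of_lt_of_le hy2 hwA), hT' i x hi1 hi2]
    ring
  have stepA' : ∀ x z : ℝ, 0 ≤ x → x < 1 → x ≤ z → z < 1 →
      (∀ r ∈ D, ¬(x < r ∧ r < z)) → z ∉ D → T z = T x + (z - x) := by
    intro x z hx0 hx1 hxz hz1 hfree hznD
    obtain ⟨i, hi1, hi2⟩ := hpiece x hx0 hx1
    have hzA : z < A ((i : ℕ) + 1) := by
      by_contra hcon
      push_neg at hcon
      rcases Nat.lt_or_ge ((i : ℕ) + 1) d with hlt | hge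
      · have hmem : A ((i : ℕ) + 1) ∈ D := hDco' _ (by omega) hlt
        rcases eq_or_lt_of_le hcon with heq | hlt'
        · exact hznD (heq ▸ hmem)
        · exact hfree _ hmem ⟨hi2, hlt'⟩
      · rw [hAone _ hge] at hcon; linarith
    rw [hT' i z (le_trans hi1 hxz) hzA, hT' i x hi1 hi2]
    ring
  have stepLL : ∀ x z : ℝ, 0 ≤ x → x < 1 → x < z → z ≤ 1 →
      (∀ r ∈ D, ¬(x < r ∧ r < z)) → (z ∈ D ∨ z = 1) →
      T x + (z - x) = 1 ∨ ∃ r ∈ D, ∃ e : ℕ, 1 ≤ e ∧ e ≤ 2 ∧ T x + (z - x) = T^[e] r := by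
    intro x z hx0 hx1 hxz hz1 hfree hzD1
    obtain ⟨i, hi1, hi2⟩ := hpiece x hx0 hx1
    have hle : z ≤ A ((i : ℕ) + 1) := by
      by_contra hcon
      push_neg at hcon
      rcases Nat.lt_or_ge ((i : ℕ) + 1) d with hlt | hge
      · exact hfree _ (hDco' _ (by omega) hlt) ⟨hi2, hcon⟩
      · rw [hAone _ hge] at hcon; linarith
    have hge' : A ((i : ℕ) + 1) ≤ z := by
      rcases hzD1 with hzD | rfl
      · obtain ⟨j, hj1, hj2, rfl⟩ := hDco z hzD
        have hij : (i : ℕ) < j := by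
          by_contra hcon
          push_neg at hcon
          have : A j ≤ A (i : ℕ) := hAmono _ _ hcon
          linarith
        exact hAmono _ _ (by omega)
      · rw [← hAone d le_rfl]; exact hAmono _ _ i.isLt
    have hzAi : z = A ((i : ℕ) + 1) := le_antisymm hle hge'
    have hTx : T x = x - A (i : ℕ) + B ((π i : Fin d) : ℕ) := hT' i x hi1 hi2
    have hkey : T x + (z - x) = B (((π i : Fin d) : ℕ) + 1) := by
      rw [hTx, hzAi, hAi1 i, hBi1 i]; ring
    rcases Nat.lt_or_ge (((π i : Fin d) : ℕ) + 1) d with hlt | hge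
    · right
      set κ : Fin d := ⟨((π i : Fin d) : ℕ) + 1, hlt⟩ with hκdef
      set i' : Fin d := π.symm κ with hi'def
      have hπi' : π i' = κ := Equiv.apply_symm_apply π κ
      have hκval : ((κ : Fin d) : ℕ) = ((π i : Fin d) : ℕ) + 1 := rfl
      by_cases hi'0 : (i' : ℕ) = 0
      · -- the seam passes through 0 = T(r₀); use T^[2]
        have h0d : 0 < d := by omega
        have hz0 : i' = ⟨0, h0d⟩ := Fin.ext hi'0
        set i0 : Fin d := π.symm ⟨0, h0d⟩ with hi0def
        have hπi0 : π i0 = ⟨0, h0d⟩ := Equiv.apply_symm_apply π _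
        have hi0ne : 1 ≤ (i0 : ℕ) := by
          rcases Nat.eq_zero_or_pos (i0 : ℕ) with h | h
          · exfalso
            have heq0 : i0 = ⟨0, h0d⟩ := Fin.ext h
            rw [heq0] at hπi0
            rw [hz0] at hπi'
            rw [hπi0] at hπi'
            have := congrArg (fun t : Fin d => (t : ℕ)) hπi'
            simp only [hκval] at this
            omega
          · exact h
        refine ⟨A (i0 : ℕ), hDco' _ hi0ne i0.isLt, 2, by norm_num, le_rfl, ?_⟩
        have hTr : T (A (i0 : ℕ)) = 0 := by
          rw [hT' i0 _ le_rfl (by rw [hAi1 i0]; have := hpos i0; linarith)]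
          rw [hπi0]
          show A (i0 : ℕ) - A (i0 : ℕ) + B 0 = 0
          rw [hB0]; ring
        have hT0 : T (0 : ℝ) = B ((κ : Fin d) : ℕ) := by
          have h01 : A ((i' : Fin d) : ℕ) ≤ (0 : ℝ) := by rw [hi'0, hA0]
          have h02 : (0 : ℝ) < A (((i' : Fin d) : ℕ) + 1) := by
            rw [hi'0, hAstep 0 h0d, hA0]
            have := hpos ⟨0, h0d⟩; linarith
          have ht := hT' i' 0 h01 h02
          rw [hπi', hi'0, hA0] at ht
          simpa using ht
        show T x + (z - x) = T^[2] (A (i0 : ℕ))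
        rw [hkey, show (2 : ℕ) = 1 + 1 from rfl, Function.iterate_succ_apply,
          Function.iterate_one, hTr, hT0]
      · have hi'ne : 1 ≤ (i' : ℕ) := Nat.one_le_iff_ne_zero.2 hi'0
        refine ⟨A (i' : ℕ), hDco' _ hi'ne i'.isLt, 1, le_rfl, by norm_num, ?_⟩
        rw [hkey, Function.iterate_one]
        rw [hT' i' _ le_rfl (by rw [hAi1 i']; have := hpos i'; linarith)]
        rw [hπi', hκval]
        ring
    · left
      rw [hkey, hBone _ hge]
  -- facts about the partition point sets
  have hDfin : D.Finite := by
    apply Set.Finite.subset (Set.finite_range (fun i : Fin d => A (i : ℕ)))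
    intro p hp
    obtain ⟨j, hj1, hj2, rfl⟩ := hDco p hp
    exact ⟨⟨j, hj2⟩, rfl⟩
  have hPfin : ∀ m : ℕ, (P m).Finite := by
    intro m
    rw [hP m]
    apply Set.Finite.union
    · exact (Set.finite_singleton 1).insert 0
    · rw [← Finset.set_biUnion_coe]
      exact Set.Finite.biUnion (Finset.finite_toSet _) (fun i _ => hDfin.image _)
  have hP01 : ∀ m : ℕ, (0 : ℝ) ∈ P m ∧ (1 : ℝ) ∈ P m := by
    intro m
    rw [hP m]
    exact ⟨Set.mem_union_left _ (by simp), Set.mem_union_left _ (by simp)⟩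
  have hPof : ∀ m k : ℕ, k ≤ m → ∀ r ∈ D, S^[k] r ∈ P m := by
    intro m k hk r hr
    rw [hP m]
    refine Set.mem_union_right _ ?_
    simp only [Set.mem_iUnion]
    exact ⟨k, Finset.mem_range.2 (by omega), ⟨r, hr, rfl⟩⟩
  have hPchar : ∀ m : ℕ, ∀ x ∈ P m,
      x = 0 ∨ x = 1 ∨ ((∃ k, k ≤ m ∧ T^[k] x ∈ D) ∧ (0 ≤ x ∧ x < 1)) := by
    intro m x hx
    rw [hP m] at hx
    rcases hx with h01 | hun
    · simp only [Set.mem_insert_iff, Set.mem_singleton_iff] at h01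
      tauto
    · right; right
      simp only [Set.mem_iUnion] at hun
      obtain ⟨k, hk, r, hr, hrx⟩ := hun
      have hk' : k ≤ m := by have := Finset.mem_range.1 hk; omega
      obtain ⟨hr0, hr1⟩ := hDsub r hr
      have hx01 := hSiter k r hr0 hr1
      rw [hrx] at hx01
      refine ⟨⟨k, hk', ?_⟩, hx01⟩
      rw [← hrx, hTS k r hr0 hr1]
      exact hr
  have hPsub : ∀ m : ℕ, ∀ x ∈ P m, 0 ≤ x ∧ x ≤ 1 := by
    intro m x hx
    rcases hPchar m x hx with rfl | rfl | ⟨_, h0, h1⟩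
    · norm_num
    · norm_num
    · exact ⟨h0, h1.le⟩
  -- the key estimate for adjacent partition points
  have key : ∀ n : ℕ, ∀ u v : ℝ, u ∈ P n → v ∈ P n → u < v →
      (∀ w ∈ P n, ¬(u < w ∧ w < v)) →
      c ≤ ((n : ℝ) + 1) * (v - u) ∨ lmin ≤ v - u := by
    intro n u v huP hvP huv hadj
    have hv1' : v ≤ 1 := (hPsub n v hvP).2
    have hu0 : 0 ≤ u := (hPsub n u huP).1
    have hu1' : u < 1 := lt_of_lt_of_le huv hv1'
    have hδ : 0 < v - u := by linarith
    -- the iterates of T translate [u,v)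
    have htrans : ∀ k, k ≤ n + 1 →
        ((∀ y, u ≤ y → y < v → T^[k] y = T^[k] u + (y - u)) ∧
          (T^[k] u + (v - u) ≤ 1) ∧
          (k ≤ n → ∀ r ∈ D, ¬(T^[k] u < r ∧ r < T^[k] u + (v - u)))) := by
      intro k
      induction k with
      | zero =>
        intro _
        refine ⟨fun y hy1 hy2 => by simp,
          by simp only [Function.iterate_zero_apply]; linarith,
          fun _ r hrD hr => ?_⟩
        obtain ⟨h1, h2⟩ := hr
        simp only [Function.iterate_zero_apply] at h1 h2
        have hrP := hPof n 0 (Nat.zero_le n) r hrD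
        simp only [Function.iterate_zero_apply] at hrP
        exact hadj r hrP ⟨h1, by linarith⟩
      | succ k ih =>
        intro hk1
        obtain ⟨ihT, ihB, ihD⟩ := ih (by omega)
        have hkn : k ≤ n := by omega
        have hxu := hTiter k u hu0 hu1'
        have hDf := ihD hkn
        have htr1 : ∀ y, u ≤ y → y < v → T^[k + 1] y = T^[k + 1] u + (y - u) := by
          intro y hy1 hy2
          have h0 : T^[k] y = T^[k] u + (y - u) := ihT y hy1 hy2
          rw [Function.iterate_succ_apply', Function.iterate_succ_apply', h0]
          have hstep := stepA (T^[k] u) (T^[k] u + (v - u)) hxu.1 hxu.2 (by linarith) ihB hDf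
            (T^[k] u + (y - u)) (by linarith) (by linarith)
          rw [hstep]; ring
        have htr2 : T^[k + 1] u + (v - u) ≤ 1 := by
          by_contra hcon
          push_neg at hcon
          have hit := hTiter (k + 1) u hu0 hu1'
          have hy01 : u < u + (1 - T^[k + 1] u) := by linarith [hit.2]
          have hy02 : u + (1 - T^[k + 1] u) < v := by linarith
          have h1 := htr1 _ hy01.le hy02
          have h2 := (hTiter (k + 1) (u + (1 - T^[k + 1] u)) (by linarith) (by linarith)).2
          rw [h1] at h2
          linarith
        refine ⟨htr1, htr2, fun hk1n r hrD hr => ?_⟩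
        obtain ⟨hr1, hr2⟩ := hr
        have hy1 : u < u + (r - T^[k + 1] u) := by linarith
        have hy2 : u + (r - T^[k + 1] u) < v := by linarith
        have h3 : T^[k + 1] (u + (r - T^[k + 1] u)) = r := by
          rw [htr1 _ hy1.le hy2]; ring
        have hy01 : 0 ≤ u + (r - T^[k + 1] u) := by linarith
        have hy02 : u + (r - T^[k + 1] u) < 1 := by linarith
        have h4 := hST (k + 1) _ hy01 hy02
        rw [h3] at h4
        have h5 := hPof n (k + 1) (by omega) r hrD
        rw [h4] at h5
        exact hadj _ h5 ⟨hy1, hy2⟩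
    -- the virtual right endpoint chain
    have hchain : ∀ b₀, b₀ ≤ n → (T^[b₀] u + (v - u) ∈ D ∨ T^[b₀] u + (v - u) = 1) →
        ∀ k, b₀ < k → k ≤ n →
        (T^[k] u + (v - u) = 1 ∨
          ∃ r ∈ D, ∃ e : ℕ, 1 ≤ e ∧ e ≤ k - b₀ + 1 ∧ T^[k] u + (v - u) = T^[e] r) := by
      intro b₀ hb₀ hstart k
      induction k with
      | zero => intro h1 _; exact absurd h1 (Nat.not_lt_zero _)
      | succ k ih =>
        intro hk1 hk2
        by_cases hkb : b₀ = k
        · subst hkb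
          obtain ⟨_, ihB, ihD⟩ := htrans b₀ (by omega)
          have hxu := hTiter b₀ u hu0 hu1'
          have hres := stepLL (T^[b₀] u) (T^[b₀] u + (v - u)) hxu.1 hxu.2 (by linarith) ihB
            (ihD (by omega)) hstart
          rw [Function.iterate_succ_apply' (f := T)]
          have heq : T (T^[b₀] u) + (v - u)
              = T (T^[b₀] u) + ((T^[b₀] u + (v - u)) - T^[b₀] u) := by ring
          rcases hres with h | ⟨r, hrD, e, he1, he2, heq2⟩
          · left; rw [heq]; exact h
          · right; exact ⟨r, hrD, e, he1, by omega, by rw [heq]; exact heq2⟩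
        · have hk1' : b₀ < k := by omega
          rcases ih hk1' (by omega) with h1 | ⟨r, hrD, e, he1, he2, heq⟩
          · obtain ⟨_, _, ihD⟩ := htrans k (by omega)
            have hxu := hTiter k u hu0 hu1'
            have hres := stepLL (T^[k] u) (T^[k] u + (v - u)) hxu.1 hxu.2 (by linarith)
              (by rw [h1]) (ihD (by omega)) (Or.inr h1)
            rw [Function.iterate_succ_apply' (f := T)]
            have heq : T (T^[k] u) + (v - u)
                = T (T^[k] u) + ((T^[k] u + (v - u)) - T^[k] u) := by ring
            rcases hres with h | ⟨r, hrD, e, he1, he2, heq2⟩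
            · left; rw [heq]; exact h
            · right; exact ⟨r, hrD, e, he1, by omega, by rw [heq]; exact heq2⟩
          · obtain ⟨_, _, ihD⟩ := htrans k (by omega)
            have hxu := hTiter k u hu0 hu1'
            have hr01 := hDsub r hrD
            have hw01 := hTiter e r hr01.1 hr01.2
            have hwnD : T^[e] r ∉ D := by
              intro hmem
              have hh := hba r hrD _ hmem e he1
              simp at hh
              linarith
            have hstep := stepA' (T^[k] u) (T^[e] r) hxu.1 hxu.2 (by rw [← heq]; linarith)
              hw01.2 (by rw [← heq]; exact ihD (by omega)) hwnD
            refine Or.inr ⟨r, hrD, e + 1, by omega, by omega, ?_⟩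
            rw [Function.iterate_succ_apply' (f := T), Function.iterate_succ_apply' (f := T),
              hstep, ← heq]
            ring
    -- classify the endpoints
    rcases hPchar n v hvP with hv0 | hv1 | ⟨⟨bw, hbwn, hbwD⟩, hv01⟩
    · exfalso; rw [hv0] at huv; linarith
    · -- v = 1
      rcases hPchar n u huP with hu00 | hu11 | ⟨⟨a, han, haD⟩, hu01⟩
      · right; rw [hu00, hv1]; simpa using hlm1
      · exfalso; rw [hu11] at hu1'; linarith
      · rcases Nat.eq_zero_or_pos a with ha0 | ha1
        · right
          rw [ha0] at haD
          simp only [Function.iterate_zero_apply] at haD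
          have := hDtop u haD
          rw [hv1]
          linarith
        · have hstart : T^[0] u + (v - u) = 1 := by
            simp only [Function.iterate_zero_apply]
            rw [hv1]; ring
          rcases hchain 0 (by omega) (Or.inr hstart) a ha1 han with h1 | ⟨r, hrD, e, he1, he2, heq⟩
          · right
            have := hDtop _ haD
            linarith
          · left
            have hh := hba r hrD _ haD e he1
            have habs : |T^[a] u - T^[e] r| = v - u := by
              have h5 : T^[a] u - T^[e] r = -(v - u) := by rw [← heq]; ring
              rw [h5, abs_neg, abs_of_pos hδ]
            rw [habs] at hh
            have hcast : ((e : ℕ) : ℝ) ≤ (n : ℝ) + 1 := by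
              exact_mod_cast (by omega : e ≤ n + 1)
            nlinarith
    · -- v < 1, let b be the first hitting time of v into D
      have hbex : ∃ k, T^[k] v ∈ D := ⟨bw, hbwD⟩
      obtain ⟨b, hbD, hbmin⟩ : ∃ b, T^[b] v ∈ D ∧ ∀ k, k < b → T^[k] v ∉ D :=
        ⟨Nat.find hbex, Nat.find_spec hbex, fun k hk => Nat.find_min hbex hk⟩
      have hbn : b ≤ n := by
        by_contra hcon
        push_neg at hcon
        exact hbmin bw (by omega) hbwD
      have hv0' : 0 ≤ v := hv01.1
      have hv1'' : v < 1 := hv01.2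
      have hfol : ∀ k, k ≤ b → T^[k] v = T^[k] u + (v - u) := by
        intro k
        induction k with
        | zero => intro _; simp
        | succ k ih =>
          intro hk
          have h0 := ih (by omega)
          have hknD : T^[k] v ∉ D := hbmin k (by omega)
          obtain ⟨_, _, ihD⟩ := htrans k (by omega)
          have hxu := hTiter k u hu0 hu1'
          have hxv := hTiter k v hv0' hv1''
          rw [Function.iterate_succ_apply' (f := T), Function.iterate_succ_apply' (f := T)]
          have hstep := stepA' (T^[k] u) (T^[k] v) hxu.1 hxu.2 (by rw [h0]; linarith) hxv.2
            (by rw [h0]; exact ihD (by omega)) hknD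
          rw [hstep, h0]; ring
      have hq := hfol b le_rfl
      rcases hPchar n u huP with hu00 | hu11 | ⟨⟨a, han, haD⟩, hu01⟩
      · -- u = 0
        left
        obtain ⟨j, hj1, hj2, hjq⟩ := hDco _ hbD
        have hd2 : 2 ≤ d := by omega
        obtain ⟨i1, hi1a, hi1b⟩ := hirr 1 (by omega) (by omega)
        have h0d : 0 < d := by omega
        have hi10 : i1 = ⟨0, h0d⟩ := by
          apply Fin.ext
          show (i1 : ℕ) = 0
          omega
        rw [hi10] at hi1b
        set i0 : Fin d := π.symm ⟨0, h0d⟩ with hi0def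
        have hπi0 : π i0 = ⟨0, h0d⟩ := Equiv.apply_symm_apply π _
        have hi0ne : 1 ≤ (i0 : ℕ) := by
          rcases Nat.eq_zero_or_pos (i0 : ℕ) with h | h
          · exfalso
            have heq0 : i0 = ⟨0, h0d⟩ := Fin.ext h
            rw [heq0] at hπi0
            rw [hπi0] at hi1b
            simp at hi1b
          · exact h
        have hr0D : A (i0 : ℕ) ∈ D := hDco' _ hi0ne i0.isLt
        have hTr0 : T (A (i0 : ℕ)) = 0 := by
          rw [hT' i0 _ le_rfl (by rw [hAi1 i0]; have := hpos i0; linarith), hπi0]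
          show A (i0 : ℕ) - A (i0 : ℕ) + B 0 = 0
          rw [hB0]; ring
        have horb : T^[b + 1] (A (i0 : ℕ)) = T^[b] u := by
          rw [Function.iterate_succ_apply, hTr0, hu00]
        have hh := hba _ hr0D _ hbD (b + 1) (by omega)
        rw [horb] at hh
        have habs : |T^[b] v - T^[b] u| = v - u := by
          have h5 : T^[b] v - T^[b] u = v - u := by rw [hq]; ring
          rw [h5, abs_of_pos hδ]
        rw [habs] at hh
        have hcast : ((b + 1 : ℕ) : ℝ) ≤ (n : ℝ) + 1 := by
          exact_mod_cast Nat.succ_le_succ hbn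
        nlinarith
      · exfalso; rw [hu11] at hu1'; linarith
      · rcases lt_trichotomy a b with hab | hab | hab
        · -- a < b
          left
          have horb : T^[b] u = T^[b - a] (T^[a] u) := by
            rw [← Function.iterate_add_apply]
            congr 1
            omega
          have hh := hba _ haD _ hbD (b - a) (by omega)
          rw [← horb] at hh
          have habs : |T^[b] v - T^[b] u| = v - u := by
            have h5 : T^[b] v - T^[b] u = v - u := by rw [hq]; ring
            rw [h5, abs_of_pos hδ]
          rw [habs] at hh
          have hcast : ((b - a : ℕ) : ℝ) ≤ (n : ℝ) + 1 := by
            exact_mod_cast (by omega : b - a ≤ n + 1)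
          nlinarith
        · -- a = b
          right
          rw [← hab] at hq hbD
          have hlt : T^[a] u < T^[a] v := by rw [hq]; linarith
          have := hDgap _ haD _ hbD hlt
          rw [hq] at this
          linarith
        · -- b < a : run the chain
          rcases hchain b hbn (Or.inl (by rw [← hq]; exact hbD)) a hab han
            with h1 | ⟨r, hrD, e, he1, he2, heq⟩
          · right
            have := hDtop _ haD
            linarith
          · left
            have hh := hba r hrD _ haD e he1
            have habs : |T^[a] u - T^[e] r| = v - u := by
              have h5 : T^[a] u - T^[e] r = -(v - u) := by rw [← heq]; ring
              rw [h5, abs_neg, abs_of_pos hδ]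
            rw [habs] at hh
            have hcast : ((e : ℕ) : ℝ) ≤ (n : ℝ) + 1 := by
              exact_mod_cast (by omega : e ≤ n + 1)
            nlinarith
  -- extend the estimate to arbitrary pairs of partition points
  have key2 : ∀ n : ℕ, ∀ x y : ℝ, x ∈ P n → y ∈ P n → x < y →
      c ≤ ((n : ℝ) + 1) * (y - x) ∨ lmin ≤ y - x := by
    intro n x y hx hy hxy
    have hfin : (P n ∩ Set.Ioc x y).Finite := (hPfin n).inter_of_left _
    have hne : (P n ∩ Set.Ioc x y).Nonempty := ⟨y, hy, hxy, le_rfl⟩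
    obtain ⟨z, hzmem, hzmin⟩ := Set.exists_min_image _ id hfin hne
    obtain ⟨hzP, hzx, hzy⟩ := hzmem
    have hadj : ∀ w ∈ P n, ¬(x < w ∧ w < z) := by
      intro w hw hww
      obtain ⟨h1, h2⟩ := hww
      have : z ≤ w := hzmin w ⟨hw, h1, le_trans h2.le hzy⟩
      linarith
    have hnn : (0 : ℝ) ≤ (n : ℝ) + 1 := by positivity
    rcases key n x z hx hzP hzx hadj with h | h
    · left; nlinarith
    · right; linarith
  -- conclusion
  refine ⟨min (c / 2) lmin, lt_min (by linarith) hlm0, ?_⟩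
  intro n hn
  have hn1 : (1 : ℝ) ≤ (n : ℝ) := by exact_mod_cast hn
  have hbnd : ∀ t ∈ {t : ℝ | ∃ x ∈ P n, ∃ y ∈ P n, x < y ∧ t = y - x},
      min (c / ((n : ℝ) + 1)) lmin ≤ t := by
    rintro t ⟨x, hx, y, hy, hxy, rfl⟩
    rcases key2 n x y hx hy hxy with h | h
    · refine le_trans (min_le_left _ _) ?_
      rw [div_le_iff₀ (by positivity)]
      nlinarith
    · exact le_trans (min_le_right _ _) h
  have hεn : min (c / ((n : ℝ) + 1)) lmin ≤ ε n := by
    rw [hε n]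
    exact le_csInf ⟨1, 0, (hP01 n).1, 1, (hP01 n).2, by norm_num, by norm_num⟩ hbnd
  rcases le_total (c / ((n : ℝ) + 1)) lmin with h | h
  · rw [min_eq_left h] at hεn
    refine le_trans (min_le_left _ _) ?_
    have h2 : c / 2 ≤ (n : ℝ) * (c / ((n : ℝ) + 1)) := by
      have hpos' : (0 : ℝ) < (n : ℝ) + 1 := by positivity
      have hrw : (n : ℝ) * (c / ((n : ℝ) + 1)) = (n : ℝ) * c / ((n : ℝ) + 1) := by ring
      rw [hrw, div_le_div_iff₀ (by norm_num : (0 : ℝ) < 2) hpos']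
      nlinarith
    have h3 : (n : ℝ) * (c / ((n : ℝ) + 1)) ≤ (n : ℝ) * ε n :=
      mul_le_mul_of_nonneg_left hεn (by positivity)
    linarith
  · rw [min_eq_right h] at hεn
    refine le_trans (min_le_right _ _) ?_
    nlinarith
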